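/- Complementary slackness for adjustment ratios in the PT model: if (π, Q, P) is PT-dual-feasible, (v, u) is PT-primal-feasible with goal price τ, and τ·(∑_{i∈I} Q i + ∑_{r∈R} P r) = ∑_{i∈I} v i · X i o − ∑_{r∈R} u r · Y r o, then (v i · X i o − τ) · Q i = 0 for every i ∈ I and (u r · Y r o − τ) · P r = 0 for every r ∈ R. -/
import Mathlib


open Finset

/-- A triple `(π, Q, P)` is PT-dual-feasible. -/
def PTDualFeasible {I R J : Type*} [Fintype I] [Fintype R] [Fintype J]
    (X : I → J → ℝ) (Y : R → J → ℝ) (o : J)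
    (π : J → ℝ) (Q : I → ℝ) (P : R → ℝ) : Prop :=
  (∀ j, 0 ≤ π j) ∧ (∀ i, 0 ≤ Q i) ∧ (∀ r, 0 ≤ P r) ∧
  (∀ i, (∑ j, X i j * π j) + Q i * X i o = X i o) ∧
  (∀ r, -(∑ j, Y r j * π j) + P r * Y r o = -(Y r o))

/-- A pair `(v, u)` is PT-primal-feasible with goal price `τ`. -/
def PTPrimalFeasible {I R J : Type*} [Fintype I] [Fintype R] [Fintype J]
    (X : I → J → ℝ) (Y : R → J → ℝ) (o : J) (τ : ℝ)
    (v : I → ℝ) (u : R → ℝ) : Prop :=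
  (∀ j, 0 ≤ (∑ i, v i * X i j) - ∑ r, u r * Y r j) ∧
  (∀ i, τ ≤ X i o * v i) ∧ (∀ r, τ ≤ Y r o * u r)

/-- Complementary slackness for adjustment ratios in the PT model. -/
theorem pt_complementary_slackness_ratios
    {I R J : Type*} [Fintype I] [Fintype R] [Fintype J]
    [Nonempty I] [Nonempty R] [Nonempty J]
    (X : I → J → ℝ) (Y : R → J → ℝ)
    (hX : ∀ i j, 0 < X i j) (hY : ∀ r j, 0 < Y r j)
    (o : J) (τ : ℝ) (hτ : 0 < τ)
    (π : J → ℝ) (Q : I → ℝ) (P : R → ℝ)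
    (hdual : PTDualFeasible X Y o π Q P)
    (v : I → ℝ) (u : R → ℝ)
    (hprimal : PTPrimalFeasible X Y o τ v u)
    (heq : τ * ((∑ i, Q i) + ∑ r, P r)
      = (∑ i, v i * X i o) - ∑ r, u r * Y r o) :
    (∀ i, (v i * X i o - τ) * Q i = 0) ∧
    (∀ r, (u r * Y r o - τ) * P r = 0) := by

  obtain ⟨hπ, hQ, hP, hdi, hdr⟩ := hdual
  obtain ⟨hpj, hpi, hpr⟩ := hprimal
  have hS : 0 ≤ ∑ j, π j * ((∑ i, v i * X i j) - ∑ r, u r * Y r j) :=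
    Finset.sum_nonneg fun j _ => mul_nonneg (hπ j) (hpj j)
  have h1 : ∑ j, π j * ∑ i, v i * X i j = ∑ i, v i * ∑ j, X i j * π j := by
    simp_rw [Finset.mul_sum]
    rw [Finset.sum_comm]
    exact Finset.sum_congr rfl fun i _ => Finset.sum_congr rfl fun j _ => by ring
  have h2 : ∑ j, π j * ∑ r, u r * Y r j = ∑ r, u r * ∑ j, Y r j * π j := by
    simp_rw [Finset.mul_sum]
    rw [Finset.sum_comm]
    exact Finset.sum_congr rfl fun r _ => Finset.sum_congr rfl fun j _ => by ring
  have key : ∑ j, π j * ((∑ i, v i * X i j) - ∑ r, u r * Y r j)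
      = -((∑ i, (v i * X i o - τ) * Q i) + ∑ r, (u r * Y r o - τ) * P r) := by
    simp_rw [mul_sub, Finset.sum_sub_distrib]
    rw [h1, h2]
    have e1 : ∑ i, v i * ∑ j, X i j * π j
        = ∑ i, (v i * X i o - (v i * X i o - τ) * Q i - τ * Q i) := by
      refine Finset.sum_congr rfl fun i _ => ?_
      have h : ∑ j, X i j * π j = X i o - Q i * X i o := by linarith [hdi i]
      rw [h]; ring
    have e2 : ∑ r, u r * ∑ j, Y r j * π j
        = ∑ r, (u r * Y r o + (u r * Y r o - τ) * P r + τ * P r) := by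
      refine Finset.sum_congr rfl fun r _ => ?_
      have h : ∑ j, Y r j * π j = Y r o + P r * Y r o := by linarith [hdr r]
      rw [h]; ring
    rw [e1, e2]
    simp only [Finset.sum_sub_distrib, Finset.sum_add_distrib, ← Finset.mul_sum]
    linarith [heq]
  have hA : 0 ≤ ∑ i, (v i * X i o - τ) * Q i :=
    Finset.sum_nonneg fun i _ => mul_nonneg (by have := hpi i; linarith [mul_comm (v i) (X i o)]) (hQ i)
  have hB : 0 ≤ ∑ r, (u r * Y r o - τ) * P r :=
    Finset.sum_nonneg fun r _ => mul_nonneg (by have := hpr r; linarith [mul_comm (u r) (Y r o)]) (hP r)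
  have hAB : (∑ i, (v i * X i o - τ) * Q i) + ∑ r, (u r * Y r o - τ) * P r = 0 := by
    rw [key] at hS; linarith
  have hA0 : ∑ i, (v i * X i o - τ) * Q i = 0 := by linarith
  have hB0 : ∑ r, (u r * Y r o - τ) * P r = 0 := by linarith
  constructor
  · intro i
    exact (Finset.sum_eq_zero_iff_of_nonneg (fun i _ =>
      mul_nonneg (by have := hpi i; linarith [mul_comm (v i) (X i o)]) (hQ i))).mp hA0 i (Finset.mem_univ i)
  · intro r
    exact (Finset.sum_eq_zero_iff_of_nonneg (fun r _ =>
      mul_nonneg (by have := hpr r; linarith [mul_comm (u r) (Y r o)]) (hP r))).mp hB0 r (Finset.mem_univ r)
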